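/- arXiv:2602.22435 — 6 statements merged into one kernel-verified Lean document; each statement's English description precedes it below -/
import Mathlib

section
/- Let p be an odd prime, K an algebraically closed field of characteristic p, and d₁ > d₂ ≥ 1 integers with p ∤ d₁. Set N = d₁(p−1). Let R be the polynomial ring over K in variables a_i for 1 ≤ i ≤ d₁−1 with p ∤ i and variables b_i for 1 ≤ i ≤ d₂ with p ∤ i. For each α ∈ K with α^N = 1, let φ_α : R → R be the K-algebra automorphism determined by a_i ↦ α^{i−d₁}·a_i and b_i ↦ α^{−i−d₁}·b_i. Then the subalgebra {f ∈ R : φ_α(f) = f for all α ∈ K with α^N = 1} is equal to the K-subalgebra of R generated by the monomials ∏ a_i^{k_i} · ∏ b_i^{n_i} satisfying Σ k_i + Σ n_i ≤ d₁(p−1) and Σ k_i(i−d₁) − Σ n_i(i+d₁) ≡ 0 (mod d₁(p−1)). -/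
open MvPolynomial

section AuxCombinatorics

variable {σ : Type*} [Fintype σ] [DecidableEq σ]

lemma aux_sum_count_mul (W : σ → ℤ) (s : Multiset σ) :
    ∑ v, (s.count v : ℤ) * W v = (s.map W).sum := by
  induction s using Multiset.induction with
  | empty => simp
  | cons a t ih =>
      simp only [Multiset.count_cons, Multiset.map_cons, Multiset.sum_cons, ← ih]
      push_cast
      simp only [add_mul, ite_mul, one_mul, zero_mul, Finset.sum_add_distrib,
        Finset.sum_ite_eq' Finset.univ a W, Finset.mem_univ, if_true]
      ring

lemma aux_sum_count (s : Multiset σ) :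
    ∑ v, s.count v = Multiset.card s := by
  induction s using Multiset.induction with
  | empty => simp
  | cons a t ih =>
      simp only [Multiset.count_cons, Multiset.card_cons, ← ih]
      rw [Finset.sum_add_distrib]
      simp [Finset.sum_ite_eq' Finset.univ a (fun _ => 1)]

lemma aux_exists_sub (W : σ → ℤ) (N : ℕ) (hN : 0 < N) (s : Multiset σ)
    (hs : N < Multiset.card s) :
    ∃ t : Multiset σ, t ≤ s ∧ t ≠ 0 ∧ Multiset.card t ≤ N ∧
      (N : ℤ) ∣ (t.map W).sum := by
  haveI : NeZero N := ⟨hN.ne'⟩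
  set l := s.toList with hl
  have hlen : l.length = Multiset.card s := Multiset.length_toList s
  have hcoe : (l : Multiset σ) = s := Multiset.coe_toList s
  have hcard : Fintype.card (ZMod N) < Fintype.card (Fin (N + 1)) := by
    simp [ZMod.card]
  obtain ⟨j, j', hne, heq⟩ :=
    Fintype.exists_ne_map_eq_of_card_lt
      (fun j : Fin (N + 1) => ((((l.take j).map W).sum : ℤ) : ZMod N)) hcard
  wlog hlt : (j : ℕ) < (j' : ℕ) generalizing j j'
  · exact this j' j hne.symm heq.symm (by omega)
  have hj'lt := j'.isLt
  have hjN : (j' : ℕ) ≤ N := by omega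
  have hjlen : (j' : ℕ) ≤ l.length := by omega
  set t : List σ := (l.drop j).take ((j' : ℕ) - j) with ht
  have hlent : t.length = (j' : ℕ) - (j : ℕ) := by
    rw [ht, List.length_take, List.length_drop]; omega
  refine ⟨(t : Multiset σ), ?_, ?_, ?_, ?_⟩
  · rw [← hcoe]
    exact Multiset.coe_le.mpr
      (((List.take_sublist _ _).trans (List.drop_sublist _ _)).subperm)
  · intro h0
    have : t.length = 0 := by rw [← Multiset.coe_card, h0]; simp
    omega
  · rw [Multiset.coe_card]; omega
  · have h2 : (j' : ℕ) = (j : ℕ) + ((j' : ℕ) - j) := by omega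
    have hsplit : l.take j' = l.take j ++ t := by
      rw [ht]
      calc l.take j' = l.take ((j : ℕ) + ((j' : ℕ) - j)) := by rw [← h2]
        _ = l.take j ++ (l.drop j).take ((j' : ℕ) - j) := List.take_add
    have hkey : ((((l.take j').map W).sum : ℤ) : ZMod N)
        = (((l.take j).map W).sum : ℤ) + (((t.map W).sum : ℤ) : ZMod N) := by
      rw [hsplit, List.map_append, List.sum_append]; push_cast; ring
    rw [← ZMod.intCast_zmod_eq_zero_iff_dvd]
    rw [← heq] at hkey
    simp only [Multiset.map_coe, Multiset.sum_coe]
    exact left_eq_add.mp hkey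

end AuxCombinatorics

section AuxScale

variable {σ : Type*} [Fintype σ] {K : Type*} [CommRing K]

lemma aux_scale_monomial (c : σ → K) (m : σ →₀ ℕ) (a : K) :
    aeval (fun v => c v • (X v : MvPolynomial σ K)) (monomial m a)
      = (∏ v, c v ^ m v) • monomial m a := by
  rw [aeval_monomial]
  rw [Finsupp.prod_fintype _ _ (fun i => pow_zero _)]
  simp_rw [smul_pow, smul_eq_C_mul]
  rw [Finset.prod_mul_distrib, ← map_prod (C : K →+* MvPolynomial σ K),
    monomial_eq, Finsupp.prod_fintype _ _ (fun i => pow_zero _), algebraMap_eq]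
  ring

lemma aux_coeff_scale (c : σ → K) (f : MvPolynomial σ K) (m : σ →₀ ℕ) :
    coeff m (aeval (fun v => c v • (X v : MvPolynomial σ K)) f)
      = (∏ v, c v ^ m v) * coeff m f := by
  classical
  conv_lhs => rw [f.as_sum, map_sum]
  simp_rw [aux_scale_monomial]
  rw [MvPolynomial.coeff_sum]
  simp_rw [coeff_smul, coeff_monomial, smul_eq_mul, mul_ite, mul_zero]
  rw [Finset.sum_ite_eq' f.support m (fun m' => (∏ v, c v ^ m' v) * coeff m' f)]
  split_ifs with h
  · rfl
  · rw [MvPolynomial.notMem_support_iff.mp h, mul_zero]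

end AuxScale

section AuxZpow

lemma aux_zpow_prod_sum {G : Type*} [CommGroup G] {σ : Type*} (u : G) (s : Finset σ)
    (z : σ → ℤ) : ∏ v ∈ s, u ^ z v = u ^ ∑ v ∈ s, z v := by
  classical
  induction s using Finset.cons_induction with
  | empty => simp
  | cons a s ha ih => rw [Finset.prod_cons, Finset.sum_cons, ih, ← zpow_add]

lemma aux_val_zpow {K : Type*} [Field K] {α : K} (hα : α ≠ 0) (z : ℤ) :
    α ^ z = ((Units.mk0 α hα ^ z : Kˣ) : K) := by
  rw [Units.val_zpow_eq_zpow_val]; rfl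

lemma aux_prod_pow_zpow {K : Type*} [Field K] {σ : Type*} [Fintype σ] {α : K} (hα : α ≠ 0)
    (W : σ → ℤ) (m : σ → ℕ) :
    ∏ v, (α ^ W v) ^ m v = α ^ (∑ v, (m v : ℤ) * W v) := by
  set u := Units.mk0 α hα with hu
  have hstep : ∀ v, (α ^ W v) ^ m v = ((u ^ ((m v : ℤ) * W v) : Kˣ) : K) := by
    intro v
    rw [aux_val_zpow hα, ← Units.val_pow_eq_pow_val, ← zpow_natCast (u ^ W v), ← zpow_mul,
      mul_comm]
  simp_rw [hstep]
  have hmp := map_prod (Units.coeHom K) (fun v => u ^ ((m v : ℤ) * W v)) Finset.univ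
  simp only [Units.coeHom_apply] at hmp
  rw [← hmp, aux_zpow_prod_sum, aux_val_zpow hα]

lemma aux_zpow_eq_one {K : Type*} [Field K] {α : K} (hα : α ≠ 0) {N : ℕ} (h1 : α ^ N = 1)
    {z : ℤ} (hz : (N : ℤ) ∣ z) : α ^ z = 1 := by
  obtain ⟨q, rfl⟩ := hz
  set u := Units.mk0 α hα with hu
  have huN : u ^ N = 1 := Units.ext (by simpa [hu] using h1)
  rw [aux_val_zpow hα, zpow_mul, zpow_natCast, huN, one_zpow, Units.val_one]

end AuxZpow

/-- invariants of the two-pole standard form with distinct pole orders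
`d₁ > d₂`. The variables `Sum.inl i` are the coefficients `a_i` and the variables
`Sum.inr i` are the coefficients `b_i`. -/
theorem stmt1 (p : ℕ) (hp : p.Prime) (hodd : Odd p)
    (K : Type*) [Field K] [IsAlgClosed K] [CharP K p]
    (d₁ d₂ : ℕ) (hd : d₁ > d₂) (hd2 : 1 ≤ d₂) (hpd : ¬ p ∣ d₁)
    (SA SB : Finset ℕ)
    (hSA : SA = (Finset.Icc 1 (d₁ - 1)).filter (fun i => ¬ p ∣ i))
    (hSB : SB = (Finset.Icc 1 d₂).filter (fun i => ¬ p ∣ i))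
    (N : ℕ) (hN : N = d₁ * (p - 1)) :
    {f : MvPolynomial ({i // i ∈ SA} ⊕ {i // i ∈ SB}) K |
        ∀ α : K, α ^ N = 1 →
          MvPolynomial.aeval
            (fun v : {i // i ∈ SA} ⊕ {i // i ∈ SB} =>
              Sum.elim
                (fun i : {i // i ∈ SA} =>
                  (α ^ ((i : ℤ) - (d₁ : ℤ))) •
                    (MvPolynomial.X (Sum.inl i) :
                      MvPolynomial ({i // i ∈ SA} ⊕ {i // i ∈ SB}) K))
                (fun i : {i // i ∈ SB} =>
                  (α ^ (-(i : ℤ) - (d₁ : ℤ))) •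
                    (MvPolynomial.X (Sum.inr i) :
                      MvPolynomial ({i // i ∈ SA} ⊕ {i // i ∈ SB}) K)) v) f
            = f}
      = (Algebra.adjoin K
          {f : MvPolynomial ({i // i ∈ SA} ⊕ {i // i ∈ SB}) K |
            ∃ k : {i // i ∈ SA} → ℕ, ∃ n : {i // i ∈ SB} → ℕ,
              (f = (∏ i : {i // i ∈ SA}, MvPolynomial.X (Sum.inl i) ^ k i) *
                    ∏ i : {i // i ∈ SB}, MvPolynomial.X (Sum.inr i) ^ n i) ∧
              (∑ i : {i // i ∈ SA}, k i) + (∑ i : {i // i ∈ SB}, n i) ≤ d₁ * (p - 1) ∧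
              ((d₁ * (p - 1) : ℤ)) ∣
                ((∑ i : {i // i ∈ SA}, (k i : ℤ) * ((i : ℤ) - (d₁ : ℤ))) -
                  ∑ i : {i // i ∈ SB}, (n i : ℤ) * ((i : ℤ) + (d₁ : ℤ)))} : Set _) := by
  classical
  -- abbreviations
  set σ := ({i // i ∈ SA} ⊕ {i // i ∈ SB}) with hσ
  set W : σ → ℤ :=
    Sum.elim (fun i : {i // i ∈ SA} => (i : ℤ) - (d₁ : ℤ))
      (fun i : {i // i ∈ SB} => -(i : ℤ) - (d₁ : ℤ)) with hW
  set wt : (σ →₀ ℕ) → ℤ := fun m => ∑ v, (m v : ℤ) * W v with hwt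
  set S : Set (MvPolynomial σ K) :=
    {f : MvPolynomial σ K |
      ∃ k : {i // i ∈ SA} → ℕ, ∃ n : {i // i ∈ SB} → ℕ,
        (f = (∏ i : {i // i ∈ SA}, MvPolynomial.X (Sum.inl i) ^ k i) *
              ∏ i : {i // i ∈ SB}, MvPolynomial.X (Sum.inr i) ^ n i) ∧
        (∑ i : {i // i ∈ SA}, k i) + (∑ i : {i // i ∈ SB}, n i) ≤ d₁ * (p - 1) ∧
        ((d₁ * (p - 1) : ℤ)) ∣
          ((∑ i : {i // i ∈ SA}, (k i : ℤ) * ((i : ℤ) - (d₁ : ℤ))) -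
            ∑ i : {i // i ∈ SB}, (n i : ℤ) * ((i : ℤ) + (d₁ : ℤ)))} with hS
  -- numeric facts
  have hp2 : 2 ≤ p := hp.two_le
  have hd₁2 : 2 ≤ d₁ := by omega
  have hNpos : 0 < N := by rw [hN]; exact Nat.mul_pos (by omega) (by omega)
  have hN0 : N ≠ 0 := hNpos.ne'
  have hNcast : (N : ℤ) = (d₁ : ℤ) * ((p : ℤ) - 1) := by
    rw [hN, Nat.cast_mul, Nat.cast_sub (by omega), Nat.cast_one]
  have hpN : ¬ p ∣ N := by
    rw [hN]
    intro h
    rcases (Nat.Prime.dvd_mul hp).mp h with h1 | h2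
    · exact hpd h1
    · have := Nat.le_of_dvd (by omega) h2; omega
  -- the weight of a monomial given by exponent functions
  have hwt_elim : ∀ (k : {i // i ∈ SA} → ℕ) (n : {i // i ∈ SB} → ℕ),
      (∑ v : σ, ((Sum.elim k n v : ℕ) : ℤ) * W v)
        = (∑ i : {i // i ∈ SA}, (k i : ℤ) * ((i : ℤ) - (d₁ : ℤ))) -
            ∑ i : {i // i ∈ SB}, (n i : ℤ) * ((i : ℤ) + (d₁ : ℤ)) := by
    intro k n
    rw [Fintype.sum_sum_type]
    simp only [hW, Sum.elim_inl, Sum.elim_inr]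
    have h1 : ∀ i : {i // i ∈ SB}, ((n i : ℤ)) * (-(i : ℤ) - (d₁ : ℤ))
        = -((n i : ℤ) * ((i : ℤ) + (d₁ : ℤ))) := fun i => by ring
    rw [Finset.sum_congr rfl (fun i _ => h1 i), Finset.sum_neg_distrib]
    ring
  -- any monomial whose weight is divisible by N lies in the adjoined algebra
  have hmono : ∀ (D : ℕ) (m : σ →₀ ℕ), Multiset.card (Finsupp.toMultiset m) = D →
      (N : ℤ) ∣ wt m → (monomial m 1 : MvPolynomial σ K) ∈ Algebra.adjoin K S := by
    intro D
    induction D using Nat.strong_induction_on with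
    | _ D ih =>
      intro m hD hdvd
      by_cases hle : Multiset.card (Finsupp.toMultiset m) ≤ N
      · -- the monomial is itself a generator
        apply Algebra.subset_adjoin
        refine ⟨fun i => m (Sum.inl i), fun i => m (Sum.inr i), ?_, ?_, ?_⟩
        · rw [monomial_eq, C_1, one_mul,
            Finsupp.prod_fintype _ _ (fun i => pow_zero _), Fintype.prod_sum_type]
        · have hcard : Multiset.card (Finsupp.toMultiset m) = ∑ v : σ, m v := by
            rw [Finsupp.card_toMultiset, Finsupp.sum_fintype _ _ (fun i => rfl)]
            rfl
          rw [hcard, Fintype.sum_sum_type] at hle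
          rw [← hN]
          exact hle
        · have hz : (∑ v : σ, ((Sum.elim (fun i => m (Sum.inl i)) (fun i => m (Sum.inr i)) v : ℕ) : ℤ) * W v) = wt m := by
            apply Finset.sum_congr rfl
            intro v _
            cases v <;> rfl
          rw [← hwt_elim (fun i => m (Sum.inl i)) (fun i => m (Sum.inr i)), hz, ← hNcast]
          exact hdvd
      · -- split off a sub-monomial of weight divisible by N
        push_neg at hle
        obtain ⟨t, hts, ht0, htN, htdvd⟩ := aux_exists_sub W N hNpos (Finsupp.toMultiset m) hle
        set m₁ := Multiset.toFinsupp t with hm₁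
        have hm₁le : m₁ ≤ m := by
          rw [Finsupp.le_def]
          intro v
          rw [hm₁, Multiset.toFinsupp_apply]
          calc t.count v ≤ (Finsupp.toMultiset m).count v := Multiset.le_iff_count.mp hts v
            _ = m v := Finsupp.count_toMultiset m v
        set m₂ := m - m₁ with hm₂
        have hsum : m₁ + m₂ = m := add_tsub_cancel_of_le hm₁le
        have hwtadd : wt (m₁ + m₂) = wt m₁ + wt m₂ := by
          simp only [hwt, Finsupp.add_apply]
          push_cast
          rw [← Finset.sum_add_distrib]
          exact Finset.sum_congr rfl fun v _ => by ring
        have hm₁multi : Finsupp.toMultiset m₁ = t := Multiset.toFinsupp_toMultiset t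
        have hwt₁ : (N : ℤ) ∣ wt m₁ := by
          have : wt m₁ = (t.map W).sum := by
            rw [hwt]
            simp only [hm₁, Multiset.toFinsupp_apply]
            exact aux_sum_count_mul W t
          rw [this]; exact htdvd
        have hwt₂ : (N : ℤ) ∣ wt m₂ := by
          have : wt m₂ = wt m - wt m₁ := by rw [← hsum, hwtadd]; ring
          rw [this]; exact dvd_sub hdvd hwt₁
        have hcards : Multiset.card (Finsupp.toMultiset m₁) + Multiset.card (Finsupp.toMultiset m₂) = D := by
          rw [← hD, ← hsum, Finsupp.toMultiset_add, Multiset.card_add]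
        have htpos : 0 < Multiset.card t := Multiset.card_pos.mpr ht0
        have hc₁ : Multiset.card (Finsupp.toMultiset m₁) < D := by
          rw [hm₁multi]; omega
        have hc₂ : Multiset.card (Finsupp.toMultiset m₂) < D := by
          rw [hm₁multi] at hcards; omega
        have : (monomial m (1 : K)) = monomial m₁ 1 * monomial m₂ 1 := by
          rw [monomial_mul, one_mul, hsum]
        rw [this]
        exact mul_mem (ih _ hc₁ m₁ rfl hwt₁) (ih _ hc₂ m₂ rfl hwt₂)
  -- rewrite the twisting substitution through the weight function
  have hfun : ∀ α : K,
      (fun v : σ =>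
        Sum.elim
          (fun i : {i // i ∈ SA} =>
            (α ^ ((i : ℤ) - (d₁ : ℤ))) • (MvPolynomial.X (Sum.inl i) : MvPolynomial σ K))
          (fun i : {i // i ∈ SB} =>
            (α ^ (-(i : ℤ) - (d₁ : ℤ))) • (MvPolynomial.X (Sum.inr i) : MvPolynomial σ K)) v)
        = fun v : σ => (α ^ W v) • (X v : MvPolynomial σ K) := by
    intro α
    funext v
    cases v <;> rfl
  have hcoeff : ∀ (α : K), α ≠ 0 → ∀ (f : MvPolynomial σ K) (m : σ →₀ ℕ),
      coeff m (aeval (fun v : σ => (α ^ W v) • (X v : MvPolynomial σ K)) f)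
        = α ^ wt m * coeff m f := by
    intro α hα f m
    rw [aux_coeff_scale, aux_prod_pow_zpow hα]
  -- roots of unity
  haveI : NeZero ((N : K)) := ⟨fun h => hpN ((CharP.cast_eq_zero_iff K p N).mp h)⟩
  obtain ⟨ζ, hζ⟩ := HasEnoughRootsOfUnity.exists_primitiveRoot K N
  have hζ0 : ζ ≠ 0 := hζ.ne_zero hN0
  have hζ1 : ζ ^ N = 1 := hζ.pow_eq_one
  -- conclude
  ext f
  simp only [Set.mem_setOf_eq, SetLike.mem_coe]
  constructor
  · intro hf
    have hinv := hf ζ hζ1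
    rw [hfun ζ] at hinv
    have hdvd : ∀ m ∈ f.support, (N : ℤ) ∣ wt m := by
      intro m hm
      have h1 : coeff m (aeval (fun v : σ => (ζ ^ W v) • (X v : MvPolynomial σ K)) f)
          = coeff m f := by rw [hinv]
      rw [hcoeff ζ hζ0 f m] at h1
      have hc : coeff m f ≠ 0 := MvPolynomial.mem_support_iff.mp hm
      have : ζ ^ wt m = 1 := by
        have h2 : ζ ^ wt m * coeff m f = 1 * coeff m f := by rw [one_mul, h1]
        exact mul_right_cancel₀ hc h2
      exact (hζ.zpow_eq_one_iff_dvd (wt m)).mp this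
    -- write f as a sum of monomials
    rw [f.as_sum]
    apply Subalgebra.sum_mem
    intro m hm
    have : (monomial m (coeff m f) : MvPolynomial σ K) = coeff m f • monomial m 1 := by
      simp [smul_monomial]
    rw [this]
    exact Subalgebra.smul_mem _ (hmono _ m rfl (hdvd m hm)) _
  · -- the adjoined algebra consists of invariants
    intro hf α hα
    rw [hfun α]
    have hα0 : α ≠ 0 := by
      intro h
      rw [h, zero_pow hN0] at hα
      exact zero_ne_one hα
    -- invariance is a subalgebra condition
    have hle : Algebra.adjoin K S ≤
        AlgHom.equalizer (aeval (fun v : σ => (α ^ W v) • (X v : MvPolynomial σ K)))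
          (AlgHom.id K (MvPolynomial σ K)) := by
      rw [Algebra.adjoin_le_iff]
      rintro g ⟨k, n, rfl, hdeg, hdvd⟩
      simp only [SetLike.mem_coe]
      have hg : ((∏ i : {i // i ∈ SA}, MvPolynomial.X (Sum.inl i) ^ k i) *
          ∏ i : {i // i ∈ SB}, MvPolynomial.X (Sum.inr i) ^ n i : MvPolynomial σ K)
          = monomial (Finsupp.equivFunOnFinite.symm (Sum.elim k n)) 1 := by
        rw [monomial_eq, C_1, one_mul,
          Finsupp.prod_fintype _ _ (fun i => pow_zero _), Fintype.prod_sum_type]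
        rfl
      rw [AlgHom.mem_equalizer, hg, aux_scale_monomial, AlgHom.id_apply]
      rw [aux_prod_pow_zpow hα0]
      have hz : (∑ v : σ, (((Finsupp.equivFunOnFinite.symm (Sum.elim k n)) v : ℕ) : ℤ) * W v)
          = (∑ i : {i // i ∈ SA}, (k i : ℤ) * ((i : ℤ) - (d₁ : ℤ))) -
              ∑ i : {i // i ∈ SB}, (n i : ℤ) * ((i : ℤ) + (d₁ : ℤ)) := by
        rw [← hwt_elim k n]
        rfl
      rw [hz, aux_zpow_eq_one hα0 hα (by rw [hNcast]; exact hdvd), one_smul]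
    have := hle hf
    rw [AlgHom.mem_equalizer] at this
    exact this
end

section
/- Let p be an odd prime, K an algebraically closed field of characteristic p, and d ≥ 2 an integer with p ∤ d and d ≢ 1 (mod p). Let F, F̃ ∈ K[x] be polynomials of degree at most d−2 with zero constant term such that the coefficient of x^i in F and in F̃ is zero whenever p divides i. Suppose α ∈ K with α ≠ 0, β ∈ K, λ ∈ K with λ ≠ 0 and λ^{p−1} = 1, and h ∈ K[x] with deg h ≤ ⌊d/p⌋ satisfy the polynomial identity (αx+β)^d + F(αx+β) = λ·(x^d + F̃(x)) + h(x)^p − h(x). Then λ = α^d, β = 0, h is a constant polynomial whose value c satisfies c^p = c, and α^d·F̃(x) = F(αx). -/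
open Polynomial

lemma coeff_pow_char' {K : Type*} [Field K] (p : ℕ) [Fact p.Prime] [CharP K p]
    (h : K[X]) (n : ℕ) :
    (h ^ p).coeff n = if p ∣ n then (h.coeff (n / p)) ^ p else 0 := by
  have := Polynomial.map_frobenius_expand (p := p) h
  rw [← this, coeff_map, coeff_expand (Fact.out : p.Prime).pos]
  split_ifs <;> simp [frobenius_def, (Fact.out : p.Prime).ne_zero]

lemma coeff_comp_C_mul_X {K : Type*} [CommRing K] (F : K[X]) (a : K) (n : ℕ) :
    (F.comp (C a * X)).coeff n = F.coeff n * a ^ n := by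
  induction F using Polynomial.induction_on' with
  | add f g hf hg => simp [add_comp, hf, hg, add_mul]
  | monomial i c =>
      simp only [monomial_comp, mul_pow, ← C_pow, ← C_mul, coeff_C_mul, coeff_X_pow,
        coeff_monomial]
      split_ifs with h1 h2 h3 <;> simp_all

/-- every isomorphism preserving the one-pole standard form with
`d ≢ 1 (mod p)` is `(x,y) ↦ (αx, α^d y)` up to `(x,y) ↦ (x, y+1)`. -/
theorem stmt4 (p : ℕ) (hp : p.Prime) (hodd : Odd p)
    (K : Type*) [Field K] [IsAlgClosed K] [CharP K p]
    (d : ℕ) (hd2 : 2 ≤ d) (hpd : ¬ p ∣ d) (hd1 : ¬ (d % p = 1 % p))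
    (F Ft : K[X])
    (hFdeg : F.degree ≤ (d - 2 : ℕ)) (hFtdeg : Ft.degree ≤ (d - 2 : ℕ))
    (hF0 : F.coeff 0 = 0) (hFt0 : Ft.coeff 0 = 0)
    (hFp : ∀ i : ℕ, p ∣ i → F.coeff i = 0) (hFtp : ∀ i : ℕ, p ∣ i → Ft.coeff i = 0)
    (α : K) (hα : α ≠ 0) (β : K) (lam : K) (hlam : lam ≠ 0) (hlam1 : lam ^ (p - 1) = 1)
    (h : K[X]) (hh : h.natDegree ≤ d / p)
    (heq : (C α * X + C β) ^ d + F.comp (C α * X + C β)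
        = C lam * (X ^ d + Ft) + h ^ p - h) :
    lam = α ^ d ∧ β = 0 ∧
      (∃ c : K, h = C c ∧ c ^ p = c) ∧
      C (α ^ d) * Ft = F.comp (C α * X) := by
  haveI : Fact p.Prime := ⟨hp⟩
  have hp2 : p ≠ 2 := by rintro rfl; simp [Nat.odd_iff] at hodd
  have hp3 : 3 ≤ p := by have := hp.two_le; omega
  have hFnd : F.natDegree ≤ d - 2 := natDegree_le_iff_degree_le.mpr hFdeg
  have hFtnd : Ft.natDegree ≤ d - 2 := natDegree_le_iff_degree_le.mpr hFtdeg
  have hq1 : (C α * X + C β).natDegree = 1 := natDegree_linear hα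
  -- degree of h is small
  have hhd : h.natDegree ≤ d / 3 := le_trans hh (Nat.div_le_div_left hp3 (by norm_num))
  have hhlt : h.natDegree < d - 1 := by omega
  -- composition degree bound
  have hFcomp : (F.comp (C α * X + C β)).natDegree ≤ d - 2 := by
    calc (F.comp (C α * X + C β)).natDegree ≤ F.natDegree * (C α * X + C β).natDegree :=
          natDegree_comp_le
      _ = F.natDegree := by rw [hq1, mul_one]
      _ ≤ d - 2 := hFnd
  -- coefficient of X^d of the leading power
  have hqd : ((C α * X + C β) ^ d).coeff d = α ^ d := by
    have hnd : ((C α * X + C β) ^ d).natDegree = d := by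
      rw [natDegree_pow, hq1, mul_one]
    have h1 : ((C α * X + C β) ^ d).coeff (((C α * X + C β) ^ d).natDegree)
        = ((C α * X + C β) ^ d).leadingCoeff := coeff_natDegree
    rw [hnd, leadingCoeff_pow, leadingCoeff_linear hα] at h1
    exact h1
  -- Step A : lam = α ^ d
  have e1 : lam = α ^ d := by
    have hA := congrArg (fun q : K[X] => q.coeff d) heq
    simp only [coeff_add, coeff_sub, coeff_C_mul, coeff_X_pow, if_pos rfl] at hA
    rw [hqd, coeff_eq_zero_of_natDegree_lt (lt_of_le_of_lt hFcomp (by omega)),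
      coeff_eq_zero_of_natDegree_lt (lt_of_le_of_lt hFtnd (by omega)),
      coeff_pow_char' p h d, if_neg hpd,
      coeff_eq_zero_of_natDegree_lt (lt_of_le_of_lt hhd (by omega))] at hA
    simpa using hA.symm
  -- Step B : β = 0
  have hfac : C α * X + C β = C α * (X + C (β * α⁻¹)) := by
    rw [mul_add, ← C_mul]
    congr 1
    field_simp
  have ednz : (d : K) ≠ 0 := by
    intro hz
    exact hpd ((CharP.cast_eq_zero_iff K p d).mp hz)
  have hpd1 : ¬ p ∣ (d - 1) := by
    rintro ⟨k, hk⟩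
    apply hd1
    have hdk : d = 1 + p * k := by
      have := hp.pos; omega
    rw [hdk, Nat.add_mul_mod_self_left]
  have e2 : β = 0 := by
    have hB := congrArg (fun q : K[X] => q.coeff (d - 1)) heq
    have hchoose : d.choose (d - 1) = d := by
      rw [Nat.choose_symm (show 1 ≤ d by omega), Nat.choose_one_right]
    simp only [coeff_add, coeff_sub, coeff_C_mul, coeff_X_pow] at hB
    rw [if_neg (by omega : ¬ d - 1 = d),
      coeff_eq_zero_of_natDegree_lt (lt_of_le_of_lt hFcomp (by omega)),
      coeff_eq_zero_of_natDegree_lt (lt_of_le_of_lt hFtnd (by omega)),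
      coeff_pow_char' p h (d - 1), if_neg hpd1,
      coeff_eq_zero_of_natDegree_lt hhlt, hfac, mul_pow, ← C_pow, coeff_C_mul,
      coeff_X_add_C_pow, (by omega : d - (d - 1) = 1), pow_one, hchoose] at hB
    have hmul : α ^ d * (β * α⁻¹ * (d : K)) = 0 := by simpa using hB
    have hb2 := (mul_eq_zero.mp hmul).resolve_left (pow_ne_zero d hα)
    rcases mul_eq_zero.mp hb2 with h' | h'
    · rcases mul_eq_zero.mp h' with h'' | h''
      · exact h''
      · exact absurd h'' (inv_ne_zero hα)
    · exact absurd h' ednz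
  -- rewrite the main equation
  subst e2
  rw [e1] at heq
  rw [C_0, add_zero] at heq
  rw [mul_pow, ← C_pow] at heq
  have hkey : F.comp (C α * X) - C (α ^ d) * Ft = h ^ p - h := by
    have := heq
    rw [mul_add] at this
    linear_combination this
  -- coefficients divisible by p
  have hDn : ∀ n : ℕ, p ∣ n → (h.coeff (n / p)) ^ p = h.coeff n := by
    intro n hn
    have hc := congrArg (fun q : K[X] => q.coeff n) hkey
    simp only [coeff_sub, coeff_C_mul, coeff_comp_C_mul_X, hFp n hn, hFtp n hn, zero_mul,
      mul_zero, sub_zero, coeff_pow_char' p h n, if_pos hn] at hc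
    exact sub_eq_zero.mp hc.symm
  -- h is constant
  have hm : h.natDegree = 0 := by
    by_contra hm
    have hm1 : 1 ≤ h.natDegree := Nat.one_le_iff_ne_zero.mpr hm
    have h0 : h ≠ 0 := fun e => hm (by simp [e])
    have hd' := hDn (p * h.natDegree) ⟨h.natDegree, rfl⟩
    rw [Nat.mul_div_cancel_left _ hp.pos] at hd'
    have hz : h.coeff (p * h.natDegree) = 0 :=
      coeff_eq_zero_of_natDegree_lt (by nlinarith [hp.two_le])
    rw [hz] at hd'
    have : h.coeff h.natDegree = 0 := by
      have := pow_eq_zero_iff hp.ne_zero |>.mp hd'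
      exact this
    exact h0 (leadingCoeff_eq_zero.mp this)
  have hC : h = C (h.coeff 0) := eq_C_of_natDegree_eq_zero hm
  set c : K := h.coeff 0 with hc0
  have hcp : c ^ p = c := by
    have := hDn 0 (dvd_zero p)
    simpa using this
  have hzero : h ^ p - h = 0 := by
    rw [hC, ← C_pow, hcp, sub_self]
  refine ⟨e1, rfl, ⟨c, hC, hcp⟩, ?_⟩
  have := hkey
  rw [hzero] at this
  have := sub_eq_zero.mp this
  linear_combination -this
end

section
/- Let p be an odd prime, K a field of characteristic p, and d an integer with d ≡ 1 (mod p) and d ≥ p+1. Let a_1, …, a_{d−2} ∈ K with a_j = 0 whenever p divides j, let A ⊆ K be the 𝔽_p-subalgebra of K generated by a_1, …, a_{d−2}, let α ∈ K with α ≠ 0, and let β ∈ K. Suppose h_0, h_1, …, h_{⌊(d−1)/p⌋} ∈ K satisfy: for every i with 0 ≤ i ≤ (d−1)/p², α^{ip}·( C(d, ip)·β^{d−ip} + Σ_{j=1}^{d−ip−2} a_{ip+j}·β^j ) = h_i^p − h_{ip}, and for every i with (d−1)/p² < i ≤ (d−1)/p, α^{ip}·( C(d, ip)·β^{d−ip}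 + Σ_{j=1}^{d−ip−2} a_{ip+j}·β^j ) = h_i^p, where C(d, ip) denotes the image in K of the binomial coefficient. Then for every i with 1 ≤ i ≤ (d−1)/p, setting j_i = ⌊log_p((d−1)/i)⌋, there exists a polynomial F_i ∈ K[x] of degree at most (d−ip)·p^{j_i−1} − 1, all of whose coefficients lie in A, such that h_i^{p^{j_i}} = α^{i·p^{j_i}}·β·F_i(β). -/
open Polynomial

/-- Auxiliary: a polynomial built from a leading coefficient and a family of lower
coefficients, with control on degree, coefficient membership, and evaluation. -/
lemma stmt6_aux (K : Type*) [Field K] (A : Subring K) (β : K)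
    (c : K) (hc : c ∈ A) (N : ℕ) (hN : 1 ≤ N) (g : ℕ → K)
    (hg : ∀ j ∈ Finset.Icc 1 (N - 2), g j ∈ A) (e : ℕ) (he : 1 ≤ e) :
    ∃ G : K[X],
      G.natDegree ≤ N * e - 1 ∧ (∀ m : ℕ, G.coeff m ∈ A) ∧
      β * G.eval β = c * β ^ (N * e) + ∑ j ∈ Finset.Icc 1 (N - 2), g j * β ^ (j * e) := by
  have hb : ∀ n : ℕ, 1 ≤ n → β ^ (n - 1) * β = β ^ n := by
    intro n hn
    conv_rhs => rw [show n = (n - 1) + 1 by omega]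
    rw [pow_succ]
  refine ⟨C c * X ^ (N * e - 1) +
      ∑ j ∈ Finset.Icc 1 (N - 2), C (g j) * X ^ (j * e - 1), ?_, ?_, ?_⟩
  · refine (Polynomial.natDegree_add_le _ _).trans (max_le
      ((Polynomial.natDegree_C_mul_X_pow_le _ _)) ?_)
    refine (Polynomial.natDegree_sum_le _ _).trans ?_
    rw [Finset.fold_max_le]
    refine ⟨Nat.zero_le _, fun j hj => (Polynomial.natDegree_C_mul_X_pow_le _ _).trans ?_⟩
    have hj' := Finset.mem_Icc.mp hj
    have : j * e ≤ N * e := Nat.mul_le_mul_right _ (by omega)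
    omega
  · intro m
    rw [Polynomial.coeff_add, Polynomial.finset_sum_coeff]
    refine A.add_mem ?_ (A.sum_mem fun j hj => ?_)
    · rw [Polynomial.coeff_C_mul_X_pow]
      split
      · exact hc
      · exact A.zero_mem
    · rw [Polynomial.coeff_C_mul_X_pow]
      split
      · exact hg j hj
      · exact A.zero_mem
  · rw [Polynomial.eval_add, Polynomial.eval_finset_sum]
    rw [mul_add, Finset.mul_sum]
    have h1 : β * eval β (C c * X ^ (N * e - 1)) = c * β ^ (N * e) := by
      simp only [Polynomial.eval_mul, Polynomial.eval_pow, Polynomial.eval_C,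
        Polynomial.eval_X]
      rw [mul_comm β, mul_assoc, hb _ (Nat.mul_le_mul hN he)]
    rw [h1]
    congr 1
    refine Finset.sum_congr rfl fun j hj => ?_
    have hj1 : 1 ≤ j := (Finset.mem_Icc.mp hj).1
    simp only [Polynomial.eval_mul, Polynomial.eval_pow, Polynomial.eval_C, Polynomial.eval_X]
    rw [mul_comm β, mul_assoc, hb _ (Nat.mul_le_mul hj1 he)]

/-- the coefficients `h_i` of the auxiliary polynomial `h(x)` satisfy
`h_i^{p^{j_i}} = α^{i p^{j_i}} β F_i(β)` with `F_i` of controlled degree and with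
coefficients in the `𝔽_p`-subalgebra `A` of `K` generated by the `a_j` (which, since
`K` has characteristic `p`, is the subring of `K` generated by the `a_j`). -/
theorem stmt6 (p : ℕ) (hp : p.Prime) (hodd : Odd p)
    (K : Type*) [Field K] [CharP K p]
    (d : ℕ) (hd1 : d % p = 1 % p) (hdp : p + 1 ≤ d)
    (a : ℕ → K) (ha : ∀ j : ℕ, 1 ≤ j → j ≤ d - 2 → p ∣ j → a j = 0)
    (A : Subring K) (hA : A = Subring.closure {x : K | ∃ j : ℕ, 1 ≤ j ∧ j ≤ d - 2 ∧ x = a j})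
    (α : K) (hα : α ≠ 0) (β : K)
    (h : ℕ → K)
    (heq1 : ∀ i : ℕ, i ≤ (d - 1) / p ^ 2 →
      α ^ (i * p) *
          ((d.choose (i * p) : K) * β ^ (d - i * p) +
            ∑ j ∈ Finset.Icc 1 (d - i * p - 2), a (i * p + j) * β ^ j)
        = h i ^ p - h (i * p))
    (heq2 : ∀ i : ℕ, (d - 1) / p ^ 2 < i → i ≤ (d - 1) / p →
      α ^ (i * p) *
          ((d.choose (i * p) : K) * β ^ (d - i * p) +
            ∑ j ∈ Finset.Icc 1 (d - i * p - 2), a (i * p + j) * β ^ j)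
        = h i ^ p) :
    ∀ i : ℕ, 1 ≤ i → i ≤ (d - 1) / p →
      ∃ F : K[X],
        F.natDegree ≤ (d - i * p) * p ^ (Nat.log p ((d - 1) / i) - 1) - 1 ∧
        (∀ m : ℕ, F.coeff m ∈ A) ∧
        h i ^ (p ^ Nat.log p ((d - 1) / i))
          = α ^ (i * p ^ Nat.log p ((d - 1) / i)) * β * F.eval β := by
  haveI : Fact p.Prime := ⟨hp⟩
  have hp1 : 1 < p := hp.one_lt
  have hp0 : 0 < p := hp.pos
  -- membership of the `a`'s and of naturals in `A`
  have haA : ∀ j : ℕ, 1 ≤ j → j ≤ d - 2 → a j ∈ A := by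
    intro j h1 h2
    rw [hA]
    exact Subring.subset_closure ⟨j, h1, h2, rfl⟩
  have hnA : ∀ n : ℕ, (n : K) ∈ A := fun n => natCast_mem A n
  -- basic numeric facts
  have hd3 : 3 ≤ d := by have := hp.two_le; omega
  -- key claim by induction on `j` where `log p ((d-1)/i) = j + 1`
  have claim : ∀ j : ℕ, ∀ i : ℕ, 1 ≤ i → i ≤ (d - 1) / p →
      Nat.log p ((d - 1) / i) = j + 1 →
      ∃ F : K[X],
        F.natDegree ≤ (d - i * p) * p ^ j - 1 ∧
        (∀ m : ℕ, F.coeff m ∈ A) ∧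
        h i ^ (p ^ (j + 1)) = α ^ (i * p ^ (j + 1)) * β * F.eval β := by
    intro j
    induction j with
    | zero =>
      intro i hi1 hi2 hlog
      -- base case: (d-1)/p² < i, use heq2
      have hip : i * p ≤ d - 1 := (Nat.le_div_iff_mul_le hp0).mp hi2
      have hdi0 : (d - 1) / i ≠ 0 := by
        have : p ≤ (d - 1) / i := by
          rw [Nat.le_div_iff_mul_le (by omega)]
          rw [mul_comm]; exact hip
        omega
      have hlt : (d - 1) / i < p ^ 2 := by
        rw [← Nat.log_lt_iff_lt_pow hp1 hdi0, hlog]; omega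
      have hilt : (d - 1) / p ^ 2 < i := by
        rw [Nat.div_lt_iff_lt_mul (by positivity)]
        have := (Nat.div_lt_iff_lt_mul (show 0 < i by omega)).mp hlt
        rwa [mul_comm] at this
      have key := heq2 i hilt hi2
      have hN1 : 1 ≤ d - i * p := by omega
      obtain ⟨G, hGdeg, hGmem, hGeval⟩ := stmt6_aux K A β
        ((d.choose (i * p) : K)) (hnA _) (d - i * p) hN1
        (fun j' => a (i * p + j')) (fun j' hj' => by
          have hj'' := Finset.mem_Icc.mp hj'
          exact haA _ (by omega) (by omega)) 1 le_rfl
      refine ⟨G, by simpa using hGdeg, hGmem, ?_⟩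
      simp only [zero_add, pow_one]
      rw [mul_assoc, hGeval]
      simp only [mul_one]
      exact key.symm
    | succ j ih =>
      intro i hi1 hi2 hlog
      -- step case: i ≤ (d-1)/p², use heq1 and the inductive hypothesis at i*p
      have hdi0 : (d - 1) / i ≠ 0 := by
        have hip : i * p ≤ d - 1 := (Nat.le_div_iff_mul_le hp0).mp hi2
        have : p ≤ (d - 1) / i := by
          rw [Nat.le_div_iff_mul_le (by omega)]; rw [mul_comm]; exact hip
        omega
      have hp2le : p ^ 2 ≤ (d - 1) / i := by
        rw [← Nat.le_log_iff_pow_le hp1 hdi0, hlog]; omega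
      have hip2 : i * p ^ 2 ≤ d - 1 := by
        have := (Nat.le_div_iff_mul_le (show 0 < i by omega)).mp hp2le
        rw [mul_comm] at this; exact this
      have hile : i ≤ (d - 1) / p ^ 2 := (Nat.le_div_iff_mul_le (by positivity)).mpr hip2
      have hip : i * p ≤ d - 1 := by nlinarith [hp.two_le]
      have hipp : i * p * p ≤ d - 1 := by
        have : i * p * p = i * p ^ 2 := by ring
        omega
      have hih := ih (i * p) (Nat.mul_pos hi1 hp0) ((Nat.le_div_iff_mul_le hp0).mpr hipp) (by
        rw [show (d - 1) / (i * p) = (d - 1) / i / p from (Nat.div_div_eq_div_mul _ _ _).symm,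
          Nat.log_div_base, hlog]
        omega)
      obtain ⟨F', hF'deg, hF'mem, hF'eval⟩ := hih
      have key := heq1 i hile
      have hkey : h i ^ p = α ^ (i * p) *
          ((d.choose (i * p) : K) * β ^ (d - i * p) +
            ∑ j' ∈ Finset.Icc 1 (d - i * p - 2), a (i * p + j') * β ^ j') + h (i * p) := by
        rw [key]; ring
      have hN1 : 1 ≤ d - i * p := by omega
      -- build polynomial for the Frobenius-power of the bracket
      obtain ⟨G, hGdeg, hGmem, hGeval⟩ := stmt6_aux K A β
        ((d.choose (i * p) : K) ^ p ^ (j + 1)) (A.pow_mem (hnA _) _) (d - i * p) hN1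
        (fun j' => a (i * p + j') ^ p ^ (j + 1)) (fun j' hj' => by
          have hj'' := Finset.mem_Icc.mp hj'
          exact A.pow_mem (haA _ (by omega) (by omega)) _) (p ^ (j + 1))
        (Nat.one_le_pow _ _ hp0)
      refine ⟨G + F', ?_, ?_, ?_⟩
      · refine (Polynomial.natDegree_add_le _ _).trans (max_le hGdeg (hF'deg.trans ?_))
        have h1 : d - i * p * p ≤ d - i * p := by
          have : i * p ≤ i * p * p := Nat.le_mul_of_pos_right _ hp0
          omega
        have h2 : (d - i * p * p) * p ^ j ≤ (d - i * p) * p ^ (j + 1) :=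
          Nat.mul_le_mul h1 (Nat.pow_le_pow_right (by omega) (by omega))
        omega
      · intro m
        rw [Polynomial.coeff_add]
        exact A.add_mem (hGmem m) (hF'mem m)
      · -- the evaluation identity
        rw [show p ^ (j + 1 + 1) = p * p ^ (j + 1) from pow_succ' p (j + 1)]
        rw [pow_mul, hkey]
        simp only [add_pow_char_pow, mul_pow, sum_pow_char_pow]
        simp only [← pow_mul]
        rw [hF'eval]
        rw [Polynomial.eval_add]
        have hexp : i * (p * p ^ (j + 1)) = i * p * p ^ (j + 1) := by ring
        rw [hexp]
        rw [mul_add (α ^ (i * p * p ^ (j + 1)) * β) (G.eval β) (F'.eval β)]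
        congr 1
        conv_rhs => rw [mul_assoc, hGeval]
  -- conclude
  intro i hi1 hi2
  have hip : i * p ≤ d - 1 := (Nat.le_div_iff_mul_le hp0).mp hi2
  have hdi0 : (d - 1) / i ≠ 0 := by
    have : p ≤ (d - 1) / i := by
      rw [Nat.le_div_iff_mul_le (by omega)]; rw [mul_comm]; exact hip
    omega
  have hlog1 : 1 ≤ Nat.log p ((d - 1) / i) := by
    have : p ^ 1 ≤ (d - 1) / i := by
      rw [pow_one, Nat.le_div_iff_mul_le (by omega)]; rw [mul_comm]; exact hip
    exact (Nat.le_log_iff_pow_le hp1 hdi0).mpr this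
  obtain ⟨F, h1, h2, h3⟩ := claim (Nat.log p ((d - 1) / i) - 1) i hi1 hi2 (by omega)
  refine ⟨F, h1, h2, ?_⟩
  rw [show Nat.log p ((d - 1) / i) = Nat.log p ((d - 1) / i) - 1 + 1 by omega]
  exact h3
end

section
/- Let K be a field of characteristic p > 0 and h ∈ K[x] a polynomial such that for every natural number i, the coefficient of x^{p·i} in h(x)^p − h(x) is zero. Then h is a constant polynomial, and its constant value c satisfies c^p = c (that is, c lies in the prime subfield of K). -/
open Polynomial

/-- if `h(x)^p − h(x)` has no monomials of exponent divisible by `p`,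
then `h` is a constant lying in the prime subfield. -/
theorem stmt7 (p : ℕ) (hp : 0 < p)
    (K : Type*) [Field K] [CharP K p]
    (h : K[X]) (hcoeff : ∀ i : ℕ, (h ^ p - h).coeff (p * i) = 0) :
    ∃ c : K, h = C c ∧ c ^ p = c := by
  haveI : NeZero p := ⟨hp.ne'⟩
  have hprime : p.Prime := (CharP.char_is_prime_of_pos K p).out
  haveI : Fact p.Prime := ⟨hprime⟩
  -- key: (h^p).coeff (p*i) = (h.coeff i)^p
  have key : ∀ i : ℕ, (h.coeff i) ^ p = h.coeff (p * i) := by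
    intro i
    have h1 : (h ^ p).coeff (p * i) = (h.coeff i) ^ p := by
      rw [← map_frobenius_expand, coeff_map, coeff_expand hprime.pos]
      simp [Nat.mul_div_cancel_left i hprime.pos, frobenius_def]
    have h2 := hcoeff i
    rw [coeff_sub, h1, sub_eq_zero] at h2
    exact h2
  have hiter : ∀ k i : ℕ, (h.coeff i) ^ (p ^ k) = h.coeff (p ^ k * i) := by
    intro k
    induction k with
    | zero => simp
    | succ n ih =>
      intro i
      rw [pow_succ, pow_mul, ih, key, ← mul_assoc, mul_comm (p ^ n) p]
  have hzero : ∀ i : ℕ, 1 ≤ i → h.coeff i = 0 := by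
    intro i hi
    obtain ⟨k, hk⟩ : ∃ k, h.natDegree < p ^ k * i := by
      obtain ⟨k, hk⟩ := pow_unbounded_of_one_lt (h.natDegree + 1) hprime.one_lt
      exact ⟨k, lt_of_lt_of_le (Nat.lt_of_succ_lt hk) (le_mul_of_one_le_right (Nat.zero_le _) hi)⟩
    have := hiter k i
    rw [coeff_eq_zero_of_natDegree_lt hk] at this
    exact pow_eq_zero_iff (by positivity) |>.mp this
  refine ⟨h.coeff 0, ?_, by simpa using key 0⟩
  ext n
  cases n with
  | zero => simp
  | succ m => simp [hzero (m + 1) (Nat.succ_le_succ (Nat.zero_le m)), coeff_C]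
end

section
/- Let K be a field and θ ∈ K with θ ≠ 0, θ ≠ 1, and θ² − θ + 1 ≠ 0. For a quadruple (a, b, c, e) ∈ K⁴ define J₁ = (θ²−θ+1)·(a² + b²/θ² + c²/(1−θ)² + e²/(θ²(1−θ)²)), J₂′ = ab − bc + ca + e·(a − b/θ² − c/(θ−1)²), J₂ = a²b² + b²c² + c²a² + e²·(a² + b²/θ⁴ + c²/(θ−1)⁴), J₃ = a²b²c² + a²b²e²/θ² + a²c²e²/(θ−1)² + b²c²e²/(θ²(1−θ)²), and J₄ = abce/(1−θ+θ²). Then each of J₁, J₂′, J₂, J₃, J₄ takes the same value at (a, b, c, e, θ) as at each of the three transformed tuples M₁(a,b,c,e,θ) = (b, a, −c, −e/θ², 1/θ), M₂(a,b,c,e,θ) = (c, −b, a, −e/(θ−1)², θ/(θ−1)), and M₃(a,b,c,e,θ) = (−e/(θ(θ−1)), b(θ−1)/θ, cθ/(θ−1), aθ(1−θ), 1−θ). (In particular, the new value of θ under each Mᵢ is again ≠ 0, ≠ 1, and has θ²−θ+1 ≠ 0, so all expressions are defined.) -/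
noncomputable section

variable {K : Type*} [Field K]

/-- The invariant `J₁`. -/
def J1 (a b c e θ : K) : K :=
  (θ ^ 2 - θ + 1) * (a ^ 2 + b ^ 2 / θ ^ 2 + c ^ 2 / (1 - θ) ^ 2 +
    e ^ 2 / (θ ^ 2 * (1 - θ) ^ 2))

/-- The invariant `J₂′`. -/
def J2' (a b c e θ : K) : K :=
  a * b - b * c + c * a + e * (a - b / θ ^ 2 - c / (θ - 1) ^ 2)

/-- The invariant `J₂`. -/
def J2 (a b c e θ : K) : K :=
  a ^ 2 * b ^ 2 + b ^ 2 * c ^ 2 + c ^ 2 * a ^ 2 +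
    e ^ 2 * (a ^ 2 + b ^ 2 / θ ^ 4 + c ^ 2 / (θ - 1) ^ 4)

/-- The invariant `J₃`. -/
def J3 (a b c e θ : K) : K :=
  a ^ 2 * b ^ 2 * c ^ 2 + a ^ 2 * b ^ 2 * e ^ 2 / θ ^ 2 +
    a ^ 2 * c ^ 2 * e ^ 2 / (θ - 1) ^ 2 + b ^ 2 * c ^ 2 * e ^ 2 / (θ ^ 2 * (1 - θ) ^ 2)

/-- The invariant `J₄`. -/
def J4 (a b c e θ : K) : K :=
  a * b * c * e / (1 - θ + θ ^ 2)

/-- The tuple of all five invariants. -/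
def Jall (a b c e θ : K) : K × K × K × K × K :=
  (J1 a b c e θ, J2' a b c e θ, J2 a b c e θ, J3 a b c e θ, J4 a b c e θ)

set_option maxHeartbeats 4000000 in
/-- the rational functions `J₁, J₂′, J₂, J₃, J₄` are invariant under the
three generators `M₁, M₂, M₃` of the group of order 24 acting on the parameters
`(a, b, c, e, θ)` of an Artin–Schreier curve with four poles of order one. -/
theorem stmt9 (a b c e θ : K) (h0 : θ ≠ 0) (h1 : θ ≠ 1) (h2 : θ ^ 2 - θ + 1 ≠ 0) :
    -- M₁ : (a,b,c,e,θ) ↦ (b, a, −c, −e/θ², 1/θ)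
    ((1 / θ ≠ 0 ∧ 1 / θ ≠ 1 ∧ (1 / θ) ^ 2 - 1 / θ + 1 ≠ 0) ∧
      Jall b a (-c) (-e / θ ^ 2) (1 / θ) = Jall a b c e θ) ∧
    -- M₂ : (a,b,c,e,θ) ↦ (c, −b, a, −e/(θ−1)², θ/(θ−1))
    ((θ / (θ - 1) ≠ 0 ∧ θ / (θ - 1) ≠ 1 ∧
        (θ / (θ - 1)) ^ 2 - θ / (θ - 1) + 1 ≠ 0) ∧
      Jall c (-b) a (-e / (θ - 1) ^ 2) (θ / (θ - 1)) = Jall a b c e θ) ∧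
    -- M₃ : (a,b,c,e,θ) ↦ (−e/(θ(θ−1)), b(θ−1)/θ, cθ/(θ−1), aθ(1−θ), 1−θ)
    ((1 - θ ≠ 0 ∧ 1 - θ ≠ 1 ∧ (1 - θ) ^ 2 - (1 - θ) + 1 ≠ 0) ∧
      Jall (-e / (θ * (θ - 1))) (b * (θ - 1) / θ) (c * θ / (θ - 1)) (a * θ * (1 - θ))
        (1 - θ) = Jall a b c e θ) := by
  have hm1 : θ - 1 ≠ 0 := sub_ne_zero.mpr h1
  have h1m : (1 : K) - θ ≠ 0 := fun h => hm1 (by linear_combination -h)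
  have h2' : (1 : K) - θ + θ ^ 2 ≠ 0 := fun h => h2 (by linear_combination h)
  have hP : θ * (θ - 1) ≠ 0 := mul_ne_zero h0 hm1
  have hP' : θ * (1 - θ) ≠ 0 := mul_ne_zero h0 h1m
  have hq1 : (θ - 1) * θ ^ 2 + θ ≠ 0 := by
    intro h
    rcases mul_eq_zero.mp (show θ * (θ ^ 2 - θ + 1) = 0 by linear_combination h)
      with h' | h'
    · exact h0 h'
    · exact h2 h'
  have hq2 : -(θ - 1) ^ 2 + θ ^ 2 * (θ - 1) ≠ 0 := by
    intro h
    rcases mul_eq_zero.mp (show (θ - 1) * (θ ^ 2 - θ + 1) = 0 by linear_combination h)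
      with h' | h'
    · exact hm1 h'
    · exact h2 h'
  have hq3 : θ + (1 - θ) ^ 2 ≠ 0 := fun h => h2 (by linear_combination h)
  refine ⟨⟨⟨one_div_ne_zero h0, ?_, ?_⟩, ?_⟩, ⟨⟨div_ne_zero h0 hm1, ?_, ?_⟩, ?_⟩,
    ⟨⟨h1m, ?_, ?_⟩, ?_⟩⟩
  · exact fun h => h1 ((div_eq_one_iff_eq h0).mp h).symm
  · intro h; field_simp at h
    rcases mul_eq_zero.mp (show θ * (θ ^ 2 - θ + 1) = 0 by linear_combination θ * h)
      with h' | h'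
    · exact h0 h'
    · exact h2 h'
  · unfold Jall J1 J2' J2 J3 J4
    simp only [Prod.mk.injEq]
    refine ⟨?_, ?_, ?_, ?_, ?_⟩ <;>
      · field_simp
        try rw [div_eq_div_iff (by simp [h0, hm1, h1m, h2, h2', hP, hP', hq1, hq2, hq3])
          (by simp [h0, hm1, h1m, h2, h2', hP, hP', hq1, hq2, hq3])]
        try rw [div_eq_iff (by simp [h0, hm1, h1m, h2, h2', hP, hP', hq1, hq2, hq3, (show θ * (θ - 1) + 1 ≠ 0 from fun h => h2 (by linear_combination h))])]
        try rw [eq_div_iff (by simp [h0, hm1, h1m, h2, h2', hP, hP', hq1, hq2, hq3])]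
        ring
  · intro h
    have := (div_eq_one_iff_eq hm1).mp h
    exact one_ne_zero (show (1 : K) = 0 by linear_combination this)
  · intro h; field_simp at h
    rcases mul_eq_zero.mp (show (θ - 1) * (θ ^ 2 - θ + 1) = 0 by linear_combination (θ - 1) * h)
      with h' | h'
    · exact hm1 h'
    · exact h2 h'
  · unfold Jall J1 J2' J2 J3 J4
    simp only [Prod.mk.injEq]
    refine ⟨?_, ?_, ?_, ?_, ?_⟩ <;>
      · field_simp
        try rw [div_eq_div_iff (by simp [h0, hm1, h1m, h2, h2', hP, hP', hq1, hq2, hq3])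
          (by simp [h0, hm1, h1m, h2, h2', hP, hP', hq1, hq2, hq3])]
        try rw [div_eq_iff (by simp [h0, hm1, h1m, h2, h2', hP, hP', hq1, hq2, hq3])]
        try rw [eq_div_iff (by simp [h0, hm1, h1m, h2, h2', hP, hP', hq1, hq2, hq3])]
        ring
  · intro h; exact h0 (by linear_combination -h)
  · intro h; apply h2; linear_combination h
  · have hD0 : (θ * (θ - 1)) ^ 2 * (θ ^ 2 * (1 - θ) ^ 2) * ((θ - 1) ^ 2 * θ ^ 2) ≠ 0 := by
      simp [h0, hm1, h1m]
    have hD1 : θ * (θ - 1) * θ * (θ * (θ - 1)) * ((θ - 1) * (θ * (θ - 1))) ≠ 0 := by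
      simp [h0, hm1]
    have hD2 : θ * (θ - 1) * (θ * (1 - θ) ^ 2) * ((θ - 1) * θ ^ 2) ≠ 0 := by
      simp [h0, hm1, h1m]
    have hD3 : (θ * (θ - 1)) ^ 2 * θ ^ 2 * (θ ^ 2 * (θ - 1) ^ 2) *
        ((θ - 1) ^ 2 * (θ * (θ - 1)) ^ 2) ≠ 0 := by simp [h0, hm1]
    have hD4 : (θ - 1) ^ 2 * (-θ) ^ 4 ≠ 0 := by simp [h0, hm1]
    have hD5 : (θ * (θ - 1)) ^ 2 * θ ^ 2 * (θ - 1) ^ 2 *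
        ((θ * (θ - 1)) ^ 2 * θ ^ 2 * (1 - θ) ^ 2) ≠ 0 := by simp [h0, hm1, h1m]
    have hD6 : (θ * (θ - 1)) ^ 2 * (θ - 1) ^ 2 * θ ^ 2 *
        (θ ^ 2 * (θ - 1) ^ 2 * ((1 - θ) ^ 2 * θ ^ 2)) ≠ 0 := by simp [h0, hm1, h1m]
    have hD8 : (θ * (θ - 1)) ^ 2 * θ ^ 2 * (θ - 1) ^ 2 *
        ((θ * (θ - 1)) ^ 2 * θ ^ 2 * (1 - θ) ^ 2) *
        ((θ * (θ - 1)) ^ 2 * (θ - 1) ^ 2 * θ ^ 2) ≠ 0 := by simp [h0, hm1, h1m]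
    have hD7 : (θ * (θ - 1)) ^ 2 * (θ ^ 2 * (1 - θ) ^ 4) * ((θ - 1) ^ 2 * (-θ) ^ 4) ≠ 0 := by
      simp [h0, hm1, h1m]
    have hz1 : (1:K) - (1 - θ) + (1 - θ) ^ 2 ≠ 0 := fun h => h2 (by linear_combination h)
    have hz2 : (1:K) - (1 - θ) ≠ 0 := by simpa using h0
    have hz3 : (1:K) - θ - 1 ≠ 0 := by simpa using h0
    unfold Jall J1 J2' J2 J3 J4
    simp only [Prod.mk.injEq]
    refine ⟨?_, ?_, ?_, ?_, ?_⟩ <;>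
      · field_simp
        try rw [div_eq_div_iff (by simp [h0, hm1, h1m, h2, h2', hP, hP', hq1, hq2, hq3])
          (by simp [h0, hm1, h1m, h2, h2', hP, hP', hq1, hq2, hq3])]
        try rw [div_eq_iff (by simp [h0, hm1, h1m, h2, h2', hP, hP', hq1, hq2, hq3])]
        try rw [eq_div_iff (by simp [h0, hm1, h1m, h2, h2', hP, hP', hq1, hq2, hq3])]
        ring

end
end

section
/- Let K be a field, d ≥ 1 an integer, a₁, …, a_d ∈ K with a_d = 1, and b₁, …, b_d ∈ K with b_d ≠ 0. Let α ∈ K with α ≠ 0 and set λ = α^d·b_d. Define the polynomials F(x) = Σ_{i=1}^{d} a_i x^i, G(x) = Σ_{i=1}^{d} b_i x^i, F′(x) = Σ_{i=1}^{d} (α^i b_i/λ)·x^i, and G′(x) = Σ_{i=1}^{d} (a_i/(λα^i))·x^i. Then F′ is monic of degree d, and in the rational function field K(x) one has F(1/(αx)) + G(αx) = λ·( F′(x) + G′(1/x) ). -/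
open Polynomial

/-- the pole-swapping isomorphism for two poles of equal order `d`
acts on the coefficients by `(a_i, b_i) ↦ (α^i b_i/λ, a_i/(λ α^i))`:
`F(1/(αx)) + G(αx) = λ (F′(x) + G′(1/x))` in `K(x)`, with `F′` monic of degree `d`. -/
theorem stmt12 (K : Type*) [Field K] (d : ℕ) (hd : 1 ≤ d)
    (a b : ℕ → K) (had : a d = 1) (hbd : b d ≠ 0)
    (α : K) (hα : α ≠ 0) (lam : K) (hlam : lam = α ^ d * b d)
    (F G F' G' : K[X])
    (hF : F = ∑ i ∈ Finset.Icc 1 d, C (a i) * X ^ i)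
    (hG : G = ∑ i ∈ Finset.Icc 1 d, C (b i) * X ^ i)
    (hF' : F' = ∑ i ∈ Finset.Icc 1 d, C (α ^ i * b i / lam) * X ^ i)
    (hG' : G' = ∑ i ∈ Finset.Icc 1 d, C (a i / (lam * α ^ i)) * X ^ i) :
    F'.Monic ∧ F'.natDegree = d ∧
      Polynomial.aeval ((RatFunc.C α * RatFunc.X)⁻¹ : RatFunc K) F +
          Polynomial.aeval (RatFunc.C α * RatFunc.X : RatFunc K) G
        = RatFunc.C lam *
            (Polynomial.aeval (RatFunc.X : RatFunc K) F' +
              Polynomial.aeval ((RatFunc.X)⁻¹ : RatFunc K) G') := by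
  have hlam0 : lam ≠ 0 := by
    rw [hlam]; exact mul_ne_zero (pow_ne_zero _ hα) hbd
  have hcoeff : F'.coeff d = 1 := by
    rw [hF', Polynomial.finset_sum_coeff, Finset.sum_eq_single d]
    · simp [hlam]; field_simp; exact ⟨fun h => absurd h hα, hbd⟩
    · intro i hi hne
      simp [coeff_C_mul, coeff_X_pow, (Ne.symm hne)]
    · intro h; exact absurd (Finset.mem_Icc.mpr ⟨hd, le_refl d⟩) h
  have hdegle : F'.natDegree ≤ d := by
    rw [hF']
    apply Polynomial.natDegree_sum_le_of_forall_le
    intro i hi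
    exact (Polynomial.natDegree_C_mul_le _ _).trans (by simp [Finset.mem_Icc.mp hi |>.2])
  have hmonic : F'.Monic := Polynomial.monic_of_natDegree_le_of_coeff_eq_one d hdegle hcoeff
  refine ⟨hmonic, le_antisymm hdegle (Polynomial.le_natDegree_of_ne_zero (by rw [hcoeff]; exact one_ne_zero)), ?_⟩
  rw [hF, hG, hF', hG']
  simp only [map_sum, map_mul, map_pow, Polynomial.aeval_C, Polynomial.aeval_X,
    RatFunc.algebraMap_eq_C]
  rw [mul_add, Finset.mul_sum, Finset.mul_sum,
    add_comm (∑ i ∈ Finset.Icc 1 d, RatFunc.C (a i) * ((RatFunc.C α * RatFunc.X)⁻¹) ^ i)]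
  congr 1
  · apply Finset.sum_congr rfl
    intro i _
    rw [mul_pow, ← map_pow]
    simp only [← mul_assoc, ← map_mul]
    congr 1
    field_simp
  · apply Finset.sum_congr rfl
    intro i _
    rw [mul_inv, mul_pow,
      show ((RatFunc.C α)⁻¹) ^ i = RatFunc.C ((α ^ i)⁻¹) by rw [inv_pow, ← map_pow, map_inv₀]]
    simp only [← mul_assoc, ← map_mul]
    congr 1
    field_simp
end
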